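/- arXiv:math/0701369 — 2 statements merged into one kernel-verified Lean document; each statement's English description precedes it below -/
import Mathlib

section
/- Let q be a real number with 0 < q < 1. Then the limit as n → ∞ (n ranging over positive integers) of ∑_{k=0}^{n} binom_q(n,k) · (1/[n]_q)^k exists and equals the Daehee constant e_q := ∑_{k=0}^{∞} 1/[k]_q! (which is a convergent series). -/
open Filter Topology

/-- The `q`-basic number `[n]_q = (1 - q^n)/(1 - q)`. -/
noncomputable def qNum (q : ℝ) (n : ℕ) : ℝ := (1 - q ^ n) / (1 - q)

/-- The `q`-factorial `[n]_q! = [1]_q [2]_q ⋯ [n]_q`, with `[0]_q! = 1`. -/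
noncomputable def qFact (q : ℝ) (n : ℕ) : ℝ := ∏ j ∈ Finset.range n, qNum q (j + 1)

/-- The Gaussian binomial coefficient `[n]_q! / ([k]_q! [n-k]_q!)`. -/
noncomputable def qBinom (q : ℝ) (n k : ℕ) : ℝ := qFact q n / (qFact q k * qFact q (n - k))

/-- The `q`-exponential `e_q(z) = ∑ z^n / [n]_q!`. -/
noncomputable def qExp (q : ℝ) (z : ℂ) : ℂ := ∑' n : ℕ, z ^ n / (qFact q n : ℂ)

/-- The `q`-sine `sin_q(z) = ∑ (-1)^n z^(2n+1) / [2n+1]_q!`. -/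
noncomputable def qSin (q : ℝ) (z : ℂ) : ℂ :=
  ∑' n : ℕ, (-1 : ℂ) ^ n * z ^ (2 * n + 1) / (qFact q (2 * n + 1) : ℂ)

/-- The `q`-cosine `cos_q(z) = ∑ (-1)^n z^(2n) / [2n]_q!`. -/
noncomputable def qCos (q : ℝ) (z : ℂ) : ℂ :=
  ∑' n : ℕ, (-1 : ℂ) ^ n * z ^ (2 * n) / (qFact q (2 * n) : ℂ)

/-- The `q`-addition power `(x ⊕_q y)^n = ∑_{k=0}^n binom_q(n,k) x^k y^(n-k)`. -/
noncomputable def qAddPow (q : ℝ) (x y : ℂ) (n : ℕ) : ℂ :=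
  ∑ k ∈ Finset.range (n + 1), (qBinom q n k : ℂ) * x ^ k * y ^ (n - k)

/-- The `q`-subtraction power `(x ⊖_q y)^n = ∑_{k=0}^n binom_q(n,k) (-1)^(n-k) x^k y^(n-k)`. -/
noncomputable def qSubPow (q : ℝ) (x y : ℂ) (n : ℕ) : ℂ :=
  ∑ k ∈ Finset.range (n + 1), (qBinom q n k : ℂ) * (-1 : ℂ) ^ (n - k) * x ^ k * y ^ (n - k)

/-- The `q`-tangent `tan_q(z) = sin_q(z)/cos_q(z)`. -/
noncomputable def qTan (q : ℝ) (z : ℂ) : ℂ := qSin q z / qCos q z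

/-- The second `q`-exponential `E_q(z) = ∑ q^(n(n-1)/2) z^n / [n]_q!`. -/
noncomputable def qExpE (q : ℝ) (z : ℂ) : ℂ :=
  ∑' n : ℕ, (q : ℂ) ^ (n * (n - 1) / 2) * z ^ n / (qFact q n : ℂ)
section
variable {q : ℝ} (hq0 : 0 < q) (hq1 : q < 1)

lemma qNum_pos (hq0 : 0 < q) (hq1 : q < 1) {n : ℕ} (hn : n ≠ 0) : 0 < qNum q n := by
  have : q ^ n < 1 := pow_lt_one₀ hq0.le hq1 hn
  have h1q : (0:ℝ) < 1 - q := by linarith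
  exact div_pos (by linarith) h1q

lemma qFact_pos (hq0 : 0 < q) (hq1 : q < 1) (n : ℕ) : 0 < qFact q n := by
  apply Finset.prod_pos
  intro j _
  exact qNum_pos hq0 hq1 (Nat.succ_ne_zero j)

lemma qNum_mono (hq0 : 0 < q) (hq1 : q < 1) {m n : ℕ} (h : m ≤ n) : qNum q m ≤ qNum q n := by
  have h1q : (0:ℝ) < 1 - q := by linarith
  have h3 : q ^ n ≤ q ^ m := pow_le_pow_of_le_one hq0.le hq1.le h
  unfold qNum
  gcongr

lemma qFact_prod (hq0 : 0 < q) (hq1 : q < 1) :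
    ∀ k n : ℕ, k ≤ n →
      qFact q n = qFact q (n - k) * ∏ j ∈ Finset.range k, qNum q (n - j) := by
  intro k
  induction k with
  | zero => intro n _; simp
  | succ k ih =>
    intro n hkn
    have hk : k ≤ n := le_of_lt (Nat.lt_of_succ_le hkn)
    have h1 : n - k = (n - (k+1)) + 1 := by omega
    have h2 : qFact q (n - k) = qFact q (n - (k+1)) * qNum q (n - k) := by
      rw [h1, qFact, Finset.prod_range_succ, ← qFact, ← h1]
    rw [ih n hk, Finset.prod_range_succ, h2]; ring
end

section
variable {q : ℝ}

lemma qTerm_eq (hq0 : 0 < q) (hq1 : q < 1) {n k : ℕ} (hn : 1 ≤ n) (hk : k ≤ n) :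
    qBinom q n k * (1 / qNum q n) ^ k
      = (1 / qFact q k) * ∏ j ∈ Finset.range k, (qNum q (n - j) / qNum q n) := by
  have hfk := qFact_pos hq0 hq1 k
  have hfnk := qFact_pos hq0 hq1 (n - k)
  have hqn := qNum_pos hq0 hq1 (by omega : n ≠ 0)
  rw [qBinom, qFact_prod hq0 hq1 k n hk, Finset.prod_div_distrib, Finset.prod_const, Finset.card_range,
    div_pow, one_pow]
  field_simp

lemma qTerm_nonneg (hq0 : 0 < q) (hq1 : q < 1) {n k : ℕ} (hn : 1 ≤ n) (hk : k ≤ n) :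
    0 ≤ qBinom q n k * (1 / qNum q n) ^ k := by
  have hqn := qNum_pos hq0 hq1 (by omega : n ≠ 0)
  have := qFact_pos hq0 hq1 n
  have := qFact_pos hq0 hq1 k
  have := qFact_pos hq0 hq1 (n - k)
  rw [qBinom]
  positivity

lemma qTerm_le (hq0 : 0 < q) (hq1 : q < 1) {n k : ℕ} (hn : 1 ≤ n) (hk : k ≤ n) :
    qBinom q n k * (1 / qNum q n) ^ k ≤ 1 / qFact q k := by
  rw [qTerm_eq hq0 hq1 hn hk]
  have hfk := qFact_pos hq0 hq1 k
  have hqn := qNum_pos hq0 hq1 (by omega : n ≠ 0)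
  have hprod : ∏ j ∈ Finset.range k, (qNum q (n - j) / qNum q n) ≤ 1 := by
    apply Finset.prod_le_one
    · intro j hj
      have hnj : 0 < qNum q (n - j) := by
        apply qNum_pos hq0 hq1
        have := Finset.mem_range.mp hj; omega
      positivity
    · intro j hj
      exact div_le_one_of_le₀ (qNum_mono hq0 hq1 (Nat.sub_le n j)) hqn.le
  calc (1 / qFact q k) * ∏ j ∈ Finset.range k, (qNum q (n - j) / qNum q n)
      ≤ (1 / qFact q k) * 1 := by
        apply mul_le_mul_of_nonneg_left hprod (by positivity)
    _ = 1 / qFact q k := mul_one _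

lemma qFact_summable (hq0 : 0 < q) (hq1 : q < 1) :
    Summable (fun k : ℕ => 1 / qFact q k) := by
  apply summable_of_ratio_norm_eventually_le (r := 1 / (1 + q))
  · rw [div_lt_one (by linarith)]; linarith
  · filter_upwards [eventually_ge_atTop 1] with k hk
    have hfk := qFact_pos hq0 hq1 k
    have hfk1 := qFact_pos hq0 hq1 (k + 1)
    rw [Real.norm_of_nonneg (by positivity), Real.norm_of_nonneg (by positivity)]
    have hstep : qFact q (k + 1) = qFact q k * qNum q (k + 1) := by
      rw [qFact, Finset.prod_range_succ, ← qFact]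
    have hge : (1 + q) ≤ qNum q (k + 1) := by
      rw [qNum, le_div_iff₀ (by linarith)]
      have : q ^ (k + 1) ≤ q ^ 2 := pow_le_pow_of_le_one hq0.le hq1.le (by omega)
      nlinarith [sq_nonneg q]
    rw [hstep]
    have h1q : (0:ℝ) < 1 + q := by linarith
    have hE : 1 / (1+q) * (1 / qFact q k) = 1 / ((1+q) * qFact q k) := by
      rw [div_mul_div_comm, one_mul]
    rw [hE]
    apply one_div_le_one_div_of_le (by positivity)
    calc (1+q) * qFact q k = qFact q k * (1+q) := by ring
    _ ≤ qFact q k * qNum q (k+1) := mul_le_mul_of_nonneg_left hge hfk.le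
    _ = qFact q k * qNum q (k+1) := rfl

lemma qNum_tendsto (hq0 : 0 < q) (hq1 : q < 1) :
    Tendsto (fun n : ℕ => qNum q n) atTop (𝓝 (1 / (1 - q))) := by
  have h := tendsto_pow_atTop_nhds_zero_of_lt_one hq0.le hq1
  have h2 : Tendsto (fun n : ℕ => (1 - q ^ n)) atTop (𝓝 (1 - 0)) :=
    tendsto_const_nhds.sub h
  have h3 := h2.div_const (1 - q)
  simpa [qNum] using h3
end


/-- The Daehee constant: the limit of the q-addition powers `(1 ⊕_q 1/[n]_q)^n`
exists and equals the convergent series `∑ 1/[k]_q!`. -/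
theorem daehee_constant (q : ℝ) (hq0 : 0 < q) (hq1 : q < 1) :
    Summable (fun k : ℕ => 1 / qFact q k) ∧
    Filter.Tendsto
      (fun n : ℕ => ∑ k ∈ Finset.range (n + 1), qBinom q n k * (1 / qNum q n) ^ k)
      Filter.atTop (nhds (∑' k : ℕ, 1 / qFact q k)) := by
  have hsum := qFact_summable hq0 hq1
  refine ⟨hsum, ?_⟩
  set g : ℕ → ℕ → ℝ := fun n k =>
    if k ≤ n then qBinom q n k * (1 / qNum q n) ^ k else 0 with hg
  have hsum_eq : ∀ n : ℕ, (∑ k ∈ Finset.range (n + 1), qBinom q n k * (1 / qNum q n) ^ k)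
      = ∑' k, g n k := by
    intro n
    have h0 : ∀ k ∉ Finset.range (n + 1), g n k = 0 := by
      intro k hk
      have hkn : ¬ k ≤ n := by
        simp only [Finset.mem_range, Nat.lt_succ_iff] at hk; exact hk
      simp [hg, hkn]
    rw [tsum_eq_sum h0]
    apply Finset.sum_congr rfl
    intro k hk
    have hkn : k ≤ n := Nat.lt_succ_iff.mp (Finset.mem_range.mp hk)
    simp [hg, hkn]
  have key : Tendsto (fun n => ∑' k, g n k) atTop (𝓝 (∑' k, 1 / qFact q k)) := by
    apply tendsto_tsum_of_dominated_convergence hsum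
    · intro k
      have hprod : Tendsto (fun n : ℕ => ∏ j ∈ Finset.range k, (qNum q (n - j) / qNum q n))
          atTop (𝓝 1) := by
        have h1 : (1:ℝ) = ∏ j ∈ Finset.range k, (1:ℝ) := by simp
        rw [h1]
        apply tendsto_finset_prod
        intro j _
        have ha : Tendsto (fun n : ℕ => qNum q (n - j)) atTop (𝓝 (1 / (1 - q))) :=
          (qNum_tendsto hq0 hq1).comp (tendsto_sub_atTop_nat j)
        have hb := qNum_tendsto hq0 hq1
        have hne : (1:ℝ) / (1 - q) ≠ 0 := by
          have : (0:ℝ) < 1 - q := by linarith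
          positivity
        rw [show (1:ℝ) = (1 / (1 - q)) / (1 / (1 - q)) from (div_self hne).symm]
        exact ha.div hb hne
      have hlim := hprod.const_mul (1 / qFact q k)
      rw [mul_one] at hlim
      have hEq : (fun n : ℕ => (1 / qFact q k) *
          ∏ j ∈ Finset.range k, (qNum q (n - j) / qNum q n)) =ᶠ[atTop] (fun n => g n k) := by
        filter_upwards [eventually_ge_atTop (max k 1)] with n hn
        have hk : k ≤ n := le_trans (le_max_left _ _) hn
        have hn1 : 1 ≤ n := le_trans (le_max_right _ _) hn
        simp only [hg, if_pos hk]
        exact (qTerm_eq hq0 hq1 hn1 hk).symm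
      exact Tendsto.congr' hEq hlim
    · filter_upwards [eventually_ge_atTop 1] with n hn k
      by_cases hk : k ≤ n
      · simp only [hg, if_pos hk]
        rw [Real.norm_of_nonneg (qTerm_nonneg hq0 hq1 hn hk)]
        exact qTerm_le hq0 hq1 hn hk
      · simp only [hg, if_neg hk, norm_zero]
        have := qFact_pos hq0 hq1 k
        positivity
  exact key.congr (fun n => (hsum_eq n).symm)
end

section
/- Let q be a real number with 0 < q < 1 and let x be a complex number with x ≠ 0, |x| < 1/(1−q), cos_q(x) ≠ 0 and cos_q(qx) ≠ 0. Then the Jackson q-derivative of tan_q at x satisfies (tan_q(x) − tan_q(qx))/((1−q)x) = 1 + tan_q(x)·tan_q(qx), where tan_q(z) = sin_q(z)/cos_q(z). -/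
open Filter Topology

lemma my_qFact_pos {q : ℝ} (hq0 : 0 < q) (hq1 : q < 1) (n : ℕ) : 0 < qFact q n := by
  unfold qFact
  apply Finset.prod_pos
  intro j _
  unfold qNum
  have h1 : q ^ (j + 1) < 1 := pow_lt_one₀ hq0.le hq1 (Nat.succ_ne_zero j)
  have h2 : (0:ℝ) < 1 - q := by linarith
  apply div_pos (by linarith) h2

lemma my_summable_norm {q : ℝ} (hq0 : 0 < q) (hq1 : q < 1) (z : ℂ)
    (hz : ‖z‖ < 1 / (1 - q)) :
    Summable (fun n : ℕ => ‖z‖ ^ n / qFact q n) := by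
  have h1q : (0:ℝ) < 1 - q := by linarith
  set a := ‖z‖ with ha
  have ha0 : 0 ≤ a := norm_nonneg z
  have haq : (1 - q) * a < 1 := by
    rw [lt_div_iff₀ h1q] at hz; nlinarith
  set r : ℝ := ((1 - q) * a + 1) / 2 with hr
  have hr1 : r < 1 := by rw [hr]; linarith
  have hr0 : (1 - q) * a < r := by rw [hr]; linarith
  have hrpos : 0 < r := by rw [hr]; nlinarith
  apply summable_of_ratio_norm_eventually_le hr1
  have htend : Tendsto (fun n : ℕ => qNum q (n + 1)) atTop (𝓝 (1 / (1 - q))) := by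
    have h := tendsto_pow_atTop_nhds_zero_of_lt_one hq0.le hq1
    have h2 : Tendsto (fun n : ℕ => (1 - q ^ (n + 1)) / (1 - q)) atTop
        (𝓝 ((1 - 0) / (1 - q))) :=
      ((h.comp (tendsto_add_atTop_nat 1)).const_sub 1).div_const _
    simp only [sub_zero] at h2
    exact h2
  have hkey : a / r < 1 / (1 - q) := by
    rw [div_lt_div_iff₀ hrpos h1q]; nlinarith
  have hev : ∀ᶠ n in atTop, a / r < qNum q (n + 1) :=
    htend.eventually (eventually_gt_nhds hkey)
  filter_upwards [hev] with n hn
  have hqn : 0 < qNum q (n + 1) := lt_of_le_of_lt (div_nonneg ha0 hrpos.le) hn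
  have hf : 0 < qFact q n := my_qFact_pos hq0 hq1 n
  have hf1 : 0 < qFact q (n + 1) := my_qFact_pos hq0 hq1 (n + 1)
  have hfs : qFact q (n + 1) = qFact q n * qNum q (n + 1) := by
    unfold qFact; exact Finset.prod_range_succ _ _
  rw [Real.norm_of_nonneg (by positivity), Real.norm_of_nonneg (by positivity)]
  have h2 : a ≤ qNum q (n + 1) * r := by
    rw [div_lt_iff₀ hrpos] at hn; linarith
  rw [hfs, pow_succ, div_le_iff₀ (by positivity), mul_comm r, mul_assoc, div_mul_eq_mul_div,
    le_div_iff₀ hf]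
  have h3 : a ^ n * a * qFact q n ≤ a ^ n * (qNum q (n + 1) * r) * qFact q n := by
    apply mul_le_mul_of_nonneg_right _ hf.le
    exact mul_le_mul_of_nonneg_left h2 (pow_nonneg ha0 n)
  nlinarith [pow_nonneg ha0 n]

lemma my_summable_qSin {q : ℝ} (hq0 : 0 < q) (hq1 : q < 1) (z : ℂ)
    (hz : ‖z‖ < 1 / (1 - q)) :
    Summable (fun n : ℕ => (-1 : ℂ) ^ n * z ^ (2 * n + 1) / (qFact q (2 * n + 1) : ℂ)) := by
  apply Summable.of_norm
  have hinj : Function.Injective (fun n : ℕ => 2 * n + 1) := by intro a b h; dsimp at h; omega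
  have h := (my_summable_norm hq0 hq1 z hz).comp_injective hinj
  apply h.congr
  intro n
  have hp := my_qFact_pos hq0 hq1 (2 * n + 1)
  simp [Function.comp, norm_div, norm_mul, norm_pow, Complex.norm_real,
    Real.norm_eq_abs, abs_of_pos hp]

lemma my_summable_qCos {q : ℝ} (hq0 : 0 < q) (hq1 : q < 1) (z : ℂ)
    (hz : ‖z‖ < 1 / (1 - q)) :
    Summable (fun n : ℕ => (-1 : ℂ) ^ n * z ^ (2 * n) / (qFact q (2 * n) : ℂ)) := by
  apply Summable.of_norm
  have hinj : Function.Injective (fun n : ℕ => 2 * n) := by intro a b h; dsimp at h; omega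
  have h := (my_summable_norm hq0 hq1 z hz).comp_injective hinj
  apply h.congr
  intro n
  have hp := my_qFact_pos hq0 hq1 (2 * n)
  simp [Function.comp, norm_div, norm_mul, norm_pow, Complex.norm_real,
    Real.norm_eq_abs, abs_of_pos hp]

lemma my_abs_qmul {q : ℝ} (hq0 : 0 < q) (hq1 : q < 1) (x : ℂ)
    (hx : ‖x‖ < 1 / (1 - q)) :
    ‖(q : ℂ) * x‖ < 1 / (1 - q) := by
  rw [norm_mul, Complex.norm_real, Real.norm_eq_abs, abs_of_pos hq0]
  have := norm_nonneg x
  nlinarith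

lemma my_qFact_succ (q : ℝ) (n : ℕ) : qFact q (n + 1) = qFact q n * qNum q (n + 1) := by
  unfold qFact; exact Finset.prod_range_succ _ _

lemma my_qSin_sub {q : ℝ} (hq0 : 0 < q) (hq1 : q < 1) (x : ℂ)
    (hx : ‖x‖ < 1 / (1 - q)) :
    qSin q x - qSin q ((q : ℂ) * x) = (1 - (q : ℂ)) * x * qCos q x := by
  have hx' := my_abs_qmul hq0 hq1 x hx
  have hs1 := my_summable_qSin hq0 hq1 x hx
  have hs2 := my_summable_qSin hq0 hq1 ((q : ℂ) * x) hx'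
  unfold qSin qCos
  rw [← Summable.tsum_sub hs1 hs2, ← tsum_mul_left]
  apply tsum_congr
  intro n
  have hF : qFact q (2 * n + 1) = qFact q (2 * n) * qNum q (2 * n + 1) := my_qFact_succ q (2 * n)
  have hF0 : (0:ℝ) < qFact q (2 * n) := my_qFact_pos hq0 hq1 (2 * n)
  have hq2 : q ^ (2 * n + 1) < 1 := pow_lt_one₀ hq0.le hq1 (by omega)
  have hne1 : ((1 : ℂ) - (q : ℂ) ^ (2 * n + 1)) ≠ 0 := by
    intro h
    have : (1:ℝ) - q ^ (2 * n + 1) = 0 := by exact_mod_cast h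
    linarith
  have hne2 : ((1 : ℂ) - (q : ℂ)) ≠ 0 := by
    intro h
    have : (1:ℝ) - q = 0 := by exact_mod_cast h
    linarith
  have hne3 : ((qFact q (2 * n) : ℝ) : ℂ) ≠ 0 := by
    exact_mod_cast ne_of_gt hF0
  rw [hF]
  push_cast [qNum]
  rw [mul_pow]
  field_simp
  ring

lemma my_qCos_sub {q : ℝ} (hq0 : 0 < q) (hq1 : q < 1) (x : ℂ)
    (hx : ‖x‖ < 1 / (1 - q)) :
    qCos q x - qCos q ((q : ℂ) * x) = -((1 - (q : ℂ)) * x) * qSin q x := by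
  have hx' := my_abs_qmul hq0 hq1 x hx
  have hs1 := my_summable_qCos hq0 hq1 x hx
  have hs2 := my_summable_qCos hq0 hq1 ((q : ℂ) * x) hx'
  unfold qCos qSin
  rw [← Summable.tsum_sub hs1 hs2, ← tsum_mul_left, Summable.tsum_eq_zero_add (hs1.sub hs2)]
  simp only [Nat.mul_zero, pow_zero, one_mul, sub_self, zero_add]
  apply tsum_congr
  intro n
  have hF : qFact q (2 * (n + 1)) = qFact q (2 * n + 1) * qNum q (2 * n + 2) := by
    have := my_qFact_succ q (2 * n + 1)
    rw [show 2 * (n + 1) = 2 * n + 1 + 1 by ring]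
    exact this
  have hF0 : (0:ℝ) < qFact q (2 * n + 1) := my_qFact_pos hq0 hq1 (2 * n + 1)
  have hq2 : q ^ (2 * n + 2) < 1 := pow_lt_one₀ hq0.le hq1 (by omega)
  have hne1 : ((1 : ℂ) - (q : ℂ) ^ (2 * n + 2)) ≠ 0 := by
    intro h
    have : (1:ℝ) - q ^ (2 * n + 2) = 0 := by exact_mod_cast h
    linarith
  have hne2 : ((1 : ℂ) - (q : ℂ)) ≠ 0 := by
    intro h
    have : (1:ℝ) - q = 0 := by exact_mod_cast h
    linarith
  have hne3 : ((qFact q (2 * n + 1) : ℝ) : ℂ) ≠ 0 := by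
    exact_mod_cast ne_of_gt hF0
  rw [hF]
  push_cast [qNum]
  rw [mul_pow, show 2 * (n + 1) = 2 * n + 2 by ring, pow_succ (-1 : ℂ) n]
  field_simp
  ring

/-- Jackson q-derivative of `tan_q`: `D_q tan_q(x) = 1 + tan_q(x) tan_q(qx)`. -/
theorem qDeriv_qTan (q : ℝ) (hq0 : 0 < q) (hq1 : q < 1) (x : ℂ) (hx0 : x ≠ 0)
    (hx : ‖x‖ < 1 / (1 - q))
    (hc1 : qCos q x ≠ 0) (hc2 : qCos q ((q : ℂ) * x) ≠ 0) :
    (qTan q x - qTan q ((q : ℂ) * x)) / ((1 - (q : ℂ)) * x) =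
      1 + qTan q x * qTan q ((q : ℂ) * x) := by

  have hA := my_qSin_sub hq0 hq1 x hx
  have hB := my_qCos_sub hq0 hq1 x hx
  have hS' : qSin q ((q : ℂ) * x) = qSin q x - (1 - (q : ℂ)) * x * qCos q x := by
    linear_combination -hA
  have hC' : qCos q ((q : ℂ) * x) = qCos q x + (1 - (q : ℂ)) * x * qSin q x := by
    linear_combination -hB
  have hne2 : ((1 : ℂ) - (q : ℂ)) ≠ 0 := by
    intro h
    have : (1:ℝ) - q = 0 := by exact_mod_cast h
    linarith
  rw [hC'] at hc2
  unfold qTan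
  rw [hS', hC']
  rw [div_eq_iff (mul_ne_zero hne2 hx0), div_sub_div _ _ hc1 hc2, div_mul_div_comm,
    one_add_div (mul_ne_zero hc1 hc2), div_mul_eq_mul_div, div_left_inj' (mul_ne_zero hc1 hc2)]
  ring
end
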